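/- Fix T > 0 and constants C ≥ c > 0. Suppose (S₁, F₁, I₁) and (S₂, F₂, I₂) are two solutions of the deterministic ε-system on [0,T] with the same initial data S₁(0,·) = S₂(0,·) and I₁(0,·) = I₂(0,·), and suppose both solutions satisfy, for all (t,x): 0 ≤ S_i(t,x) ≤ C, S_i(t,x) + I_i(t,x) ≥ c, and 0 ≤ F_i(t,x) ≤ λ*C. Then (S₁, F₁, I₁) = (S₂, F₂, I₂) on [0,T] × D_ε. -/

import Mathlib

open MeasureTheory Set

abbrev Grid (d n : ℕ) := Fin d → ZMod n

/-- Discrete Laplacian on the grid of mesh `ε = 1/n` (the factor `(n:ℝ)^2` is `ε⁻²`). -/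
noncomputable def discLap (d n : ℕ) (f : Grid d n → ℝ) (x : Grid d n) : ℝ :=
  (n : ℝ) ^ 2 * ∑ i : Fin d,
    (f (Function.update x i (x i + 1)) - 2 * f x + f (Function.update x i (x i - 1)))

/-- Matrix of the discrete Laplacian. -/
noncomputable def lapMat (d n : ℕ) [NeZero n] : Matrix (Grid d n) (Grid d n) ℝ :=
  Matrix.of fun x y => discLap d n (fun z => if z = y then 1 else 0) x

/-- `heatKer d n ν s t y x = (e^{(t-s) ν Δ_ε})_{y,x}`. -/
noncomputable def heatKer (d n : ℕ) [NeZero n] (ν s t : ℝ) (y x : Grid d n) : ℝ :=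
  NormedSpace.exp ((t - s) • ν • lapMat d n) y x

/-- The half-open cube of side `1/n` based at grid point `x`, as a subset of `ℝ^d`. -/
noncomputable def cell (d n : ℕ) (x : Grid d n) : Set (Fin d → ℝ) :=
  Set.univ.pi fun i => Set.Ico (((x i).val : ℝ) / n) ((((x i).val : ℝ) + 1) / n)

/-- Cell average `ε^{-d} ∫_{V_ε(x)} f(y) dy`. -/
noncomputable def cellAvg (d n : ℕ) (f : (Fin d → ℝ) → ℝ) (x : Grid d n) : ℝ :=
  (n : ℝ) ^ d * ∫ y in cell d n x, f y

/-- The force of infection `Γ(t,x) = B(t,x)^{-γ} Σ_y β_ε^{x,y}(t) F(t,y)`. -/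
noncomputable def gam (d n : ℕ) [NeZero n] (γ : ℝ) (βe : ℝ → Grid d n → Grid d n → ℝ)
    (S I F : ℝ → Grid d n → ℝ) (t : ℝ) (x : Grid d n) : ℝ :=
  (S t x + I t x) ^ (-γ) * ∑ y, βe t x y * F t y

/-- `(S,F,I)` solves the deterministic `ε`-system on `[0,T]`. -/
noncomputable def IsSolution (d n : ℕ) [NeZero n] (νS νI γ : ℝ) (lam lam0 : ℝ → ℝ)
    (βe : ℝ → Grid d n → Grid d n → ℝ) (T : ℝ) (S F I : ℝ → Grid d n → ℝ) : Prop :=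
  (∀ x, ContinuousOn (fun t => S t x) (Icc 0 T)) ∧
  (∀ x, ContinuousOn (fun t => F t x) (Icc 0 T)) ∧
  (∀ x, ContinuousOn (fun t => I t x) (Icc 0 T)) ∧
  (∀ t ∈ Icc (0:ℝ) T, ∀ x,
    S t x = S 0 x - (∫ s in (0:ℝ)..t, S s x * gam d n γ βe S I F s x)
      + νS * ∫ s in (0:ℝ)..t, discLap d n (S s) x) ∧
  (∀ t ∈ Icc (0:ℝ) T, ∀ x,
    F t x = lam0 t * (∑ y, I 0 y * heatKer d n νI 0 t y x)
      + ∑ y, ∫ s in (0:ℝ)..t,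
          lam (t - s) * (S s y * gam d n γ βe S I F s y) * heatKer d n νI s t y x) ∧
  (∀ t ∈ Icc (0:ℝ) T, ∀ x,
    I t x = I 0 x + (∫ s in (0:ℝ)..t, S s x * gam d n γ βe S I F s x)
      + νI * ∫ s in (0:ℝ)..t, discLap d n (I s) x)



section Helpers

lemma discLap_sub (d n : ℕ) (f g : Grid d n → ℝ) (x : Grid d n) :
    discLap d n (fun z => f z - g z) x = discLap d n f x - discLap d n g x := by
  unfold discLap
  rw [← mul_sub, ← Finset.sum_sub_distrib]
  congr 1
  apply Finset.sum_congr rfl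
  intros; ring

lemma abs_discLap_le (d n : ℕ) [NeZero n] (f : Grid d n → ℝ) (x : Grid d n) :
    |discLap d n f x| ≤ (n:ℝ)^2 * (4 * d) * ∑ z, |f z| := by
  classical
  have habs : ∀ z : Grid d n, |f z| ≤ ∑ w, |f w| := fun z =>
    Finset.single_le_sum (fun w _ => abs_nonneg (f w)) (Finset.mem_univ z)
  have hterm : ∀ i : Fin d,
      |f (Function.update x i (x i + 1)) - 2 * f x + f (Function.update x i (x i - 1))|
        ≤ 4 * ∑ w, |f w| := by
    intro i
    have h1 := habs (Function.update x i (x i + 1))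
    have h2 := habs (Function.update x i (x i - 1))
    have h3 := habs x
    have n1 := neg_abs_le (f (Function.update x i (x i + 1)))
    have n2 := neg_abs_le (f (Function.update x i (x i - 1)))
    have n3 := neg_abs_le (f x)
    have l1 := le_abs_self (f (Function.update x i (x i + 1)))
    have l2 := le_abs_self (f (Function.update x i (x i - 1)))
    have l3 := le_abs_self (f x)
    rw [abs_le]
    constructor <;> linarith
  have h1 : |∑ i : Fin d, (f (Function.update x i (x i + 1)) - 2 * f x
      + f (Function.update x i (x i - 1)))| ≤ (d : ℝ) * (4 * ∑ w, |f w|) := by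
    refine le_trans (Finset.abs_sum_le_sum_abs _ _) ?_
    calc ∑ i : Fin d, |f (Function.update x i (x i + 1)) - 2 * f x
          + f (Function.update x i (x i - 1))|
        ≤ ∑ _i : Fin d, (4 * ∑ w, |f w|) := Finset.sum_le_sum fun i _ => hterm i
      _ = (d : ℝ) * (4 * ∑ w, |f w|) := by
          rw [Finset.sum_const, Finset.card_univ, Fintype.card_fin, nsmul_eq_mul]
  unfold discLap
  rw [abs_mul, abs_of_nonneg (by positivity : (0:ℝ) ≤ (n:ℝ)^2)]
  calc (n:ℝ)^2 * |∑ i : Fin d, (f (Function.update x i (x i + 1)) - 2 * f x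
        + f (Function.update x i (x i - 1)))|
      ≤ (n:ℝ)^2 * ((d : ℝ) * (4 * ∑ w, |f w|)) :=
        mul_le_mul_of_nonneg_left h1 (by positivity)
    _ = (n:ℝ)^2 * (4 * d) * ∑ z, |f z| := by ring

lemma heatKer_abs_le (d n : ℕ) [NeZero n] (ν T : ℝ) (hT : 0 ≤ T) :
    ∃ M : ℝ, 0 ≤ M ∧ ∀ s t : ℝ, s ∈ Icc 0 T → t ∈ Icc 0 T → ∀ y x : Grid d n,
      |heatKer d n ν s t y x| ≤ M := by
  letI : SeminormedRing (Matrix (Grid d n) (Grid d n) ℝ) := Matrix.linftyOpSemiNormedRing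
  letI : NormedRing (Matrix (Grid d n) (Grid d n) ℝ) := Matrix.linftyOpNormedRing
  letI : NormedAlgebra ℝ (Matrix (Grid d n) (Grid d n) ℝ) := Matrix.linftyOpNormedAlgebra
  letI : NormedAlgebra ℚ (Matrix (Grid d n) (Grid d n) ℝ) := NormedAlgebra.restrictScalars ℚ ℝ _
  have hcont : Continuous fun u : ℝ => NormedSpace.exp (u • ν • lapMat d n) :=
    NormedSpace.exp_continuous.comp (continuous_id.smul continuous_const)
  obtain ⟨M, hM⟩ := (isCompact_Icc (a := -T) (b := T)).exists_bound_of_continuousOn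
    hcont.continuousOn
  refine ⟨max M 0, le_max_right _ _, fun s t hs ht y x => ?_⟩
  have hts : t - s ∈ Icc (-T) T := ⟨by linarith [ht.1, hs.2], by linarith [hs.1, ht.2]⟩
  have hentry : |heatKer d n ν s t y x| ≤ ‖NormedSpace.exp ((t - s) • ν • lapMat d n)‖ := by
    rw [heatKer]
    set A := NormedSpace.exp ((t - s) • ν • lapMat d n) with hA
    have h1 : ‖A y x‖₊ ≤ ‖A‖₊ := by
      rw [Matrix.linfty_opNNNorm_def]
      exact le_trans (Finset.single_le_sum (f := fun j => ‖A y j‖₊)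
        (fun _ _ => zero_le) (Finset.mem_univ x)) (Finset.le_sup (f := fun i => ∑ j, ‖A i j‖₊) (Finset.mem_univ y))
    have h2 : ‖A y x‖ ≤ ‖A‖ := by exact_mod_cast h1
    simpa [Real.norm_eq_abs] using h2
  exact hentry.trans ((hM _ hts).trans (le_max_left _ _))

lemma heatKer_cont_left (d n : ℕ) [NeZero n] (ν t : ℝ) (y x : Grid d n) :
    Continuous fun s => heatKer d n ν s t y x := by
  letI : SeminormedRing (Matrix (Grid d n) (Grid d n) ℝ) := Matrix.linftyOpSemiNormedRing
  letI : NormedRing (Matrix (Grid d n) (Grid d n) ℝ) := Matrix.linftyOpNormedRing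
  letI : NormedAlgebra ℝ (Matrix (Grid d n) (Grid d n) ℝ) := Matrix.linftyOpNormedAlgebra
  letI : NormedAlgebra ℚ (Matrix (Grid d n) (Grid d n) ℝ) := NormedAlgebra.restrictScalars ℚ ℝ _
  have hcont : Continuous fun s : ℝ => NormedSpace.exp ((t - s) • ν • lapMat d n) :=
    NormedSpace.exp_continuous.comp ((continuous_const.sub continuous_id).smul continuous_const)
  exact (continuous_apply x).comp ((continuous_apply y).comp hcont)

lemma gronwall_integral_zero {T K : ℝ} (hT : 0 ≤ T) (hK : 0 ≤ K) {φ : ℝ → ℝ}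
    (hφ : Continuous φ) (hφ0 : ∀ t, 0 ≤ φ t)
    (h : ∀ t ∈ Icc (0:ℝ) T, φ t ≤ K * ∫ s in (0:ℝ)..t, φ s) :
    ∀ t ∈ Icc (0:ℝ) T, φ t = 0 := by
  set g : ℝ → ℝ := fun t => ∫ s in (0:ℝ)..t, φ s with hg
  have hder : ∀ t : ℝ, HasDerivAt g (φ t) t := fun t =>
    (hφ.integral_hasStrictDerivAt 0 t).hasDerivAt
  have hgnn : ∀ t ∈ Icc (0:ℝ) T, 0 ≤ g t := fun t ht =>
    intervalIntegral.integral_nonneg ht.1 fun s _ => hφ0 s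
  have key : ∀ t ∈ Icc (0:ℝ) T, ‖g t‖ ≤ gronwallBound 0 K 0 (t - 0) := by
    apply norm_le_gronwallBound_of_norm_deriv_right_le
    · exact fun t _ => (hder t).continuousAt.continuousWithinAt
    · exact fun t _ => (hder t).hasDerivWithinAt
    · simp [hg]
    · intro s hs
      have h0 : 0 ≤ g s := hgnn s ⟨hs.1, hs.2.le⟩
      have h1 := h s ⟨hs.1, hs.2.le⟩
      rw [Real.norm_eq_abs, Real.norm_eq_abs, abs_of_nonneg (hφ0 s), abs_of_nonneg h0]
      linarith
  intro t ht
  have hg0 : g t = 0 := by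
    have h2 := key t ht
    rw [gronwallBound_ε0_δ0, Real.norm_eq_abs] at h2
    exact abs_eq_zero.mp (le_antisymm h2 (abs_nonneg _))
  have h3 := h t ht
  rw [show (∫ s in (0:ℝ)..t, φ s) = g t from rfl, hg0, mul_zero] at h3
  exact le_antisymm h3 (hφ0 t)

lemma rpow_neg_lipschitz {c γ : ℝ} (hc : 0 < c) (hγ : 0 ≤ γ) {a b : ℝ}
    (ha : c ≤ a) (hb : c ≤ b) :
    |a ^ (-γ) - b ^ (-γ)| ≤ γ * c ^ (-γ - 1) * |a - b| := by
  have hder : ∀ x ∈ Ici c, HasDerivWithinAt (fun y : ℝ => y ^ (-γ))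
      (-γ * x ^ (-γ - 1)) (Ici c) x := by
    intro x hx
    have hx0 : x ≠ 0 := (lt_of_lt_of_le hc hx).ne'
    exact (Real.hasDerivAt_rpow_const (Or.inl hx0)).hasDerivWithinAt
  have hbound : ∀ x ∈ Ici c, ‖-γ * x ^ (-γ - 1)‖ ≤ γ * c ^ (-γ - 1) := by
    intro x hx
    rw [Real.norm_eq_abs, abs_mul, abs_neg, abs_of_nonneg hγ,
      abs_of_nonneg (Real.rpow_nonneg (le_of_lt (lt_of_lt_of_le hc hx)) _)]
    exact mul_le_mul_of_nonneg_left
      (Real.rpow_le_rpow_of_nonpos hc hx (by linarith)) hγ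
  have h := (convex_Ici c).norm_image_sub_le_of_norm_hasDerivWithin_le hder hbound hb ha
  simpa [Real.norm_eq_abs] using h

lemma measurable_rpow_const' (p : ℝ) : Measurable fun x : ℝ => x ^ p := by
  measurability

end Helpers
/-- uniqueness for the deterministic `ε`-system among solutions
staying in the region `0 ≤ S ≤ C`, `S + I ≥ c`, `0 ≤ F ≤ λ* C`. -/
theorem uniqueness_deterministic_system
    (d : ℕ) (hd : 1 ≤ d) (n : ℕ) [NeZero n]
    (νS νI γ lamStar βStar c C T : ℝ)
    (hνS : 0 < νS) (hνI : 0 < νI) (hγ : γ ∈ Icc (0:ℝ) 1)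
    (hls : 0 < lamStar) (hbs : 0 < βStar)
    (hc : 0 < c) (hcC : c ≤ C) (hT : 0 < T)
    (lam lam0 : ℝ → ℝ) (hlamm : Measurable lam) (hlam0m : Measurable lam0)
    (hlamb : ∀ t, lam t ∈ Icc 0 lamStar) (hlam0b : ∀ t, lam0 t ∈ Icc 0 lamStar)
    (βe : ℝ → Grid d n → Grid d n → ℝ)
    (hβm : ∀ x y, Measurable fun t => βe t x y)
    (hβ0 : ∀ t x y, 0 ≤ βe t x y)
    (hβsum : ∀ t x, ∑ y, βe t x y ≤ βStar)
    (S₁ F₁ I₁ S₂ F₂ I₂ : ℝ → Grid d n → ℝ)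
    (hinitS : ∀ x, S₁ 0 x = S₂ 0 x) (hinitI : ∀ x, I₁ 0 x = I₂ 0 x)
    (hsol₁ : IsSolution d n νS νI γ lam lam0 βe T S₁ F₁ I₁)
    (hsol₂ : IsSolution d n νS νI γ lam lam0 βe T S₂ F₂ I₂)
    (hreg₁ : ∀ t ∈ Icc (0:ℝ) T, ∀ x,
      S₁ t x ∈ Icc 0 C ∧ c ≤ S₁ t x + I₁ t x ∧ F₁ t x ∈ Icc 0 (lamStar * C))
    (hreg₂ : ∀ t ∈ Icc (0:ℝ) T, ∀ x,
      S₂ t x ∈ Icc 0 C ∧ c ≤ S₂ t x + I₂ t x ∧ F₂ t x ∈ Icc 0 (lamStar * C)) :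
    ∀ t ∈ Icc (0:ℝ) T, ∀ x,
      S₁ t x = S₂ t x ∧ F₁ t x = F₂ t x ∧ I₁ t x = I₂ t x := by

  classical
  obtain ⟨hS₁c, hF₁c, hI₁c, hS₁e, hF₁e, hI₁e⟩ := hsol₁
  obtain ⟨hS₂c, hF₂c, hI₂c, hS₂e, hF₂e, hI₂e⟩ := hsol₂
  obtain ⟨M, hM0, hM⟩ := heatKer_abs_le d n νI T hT.le
  have hγ0 : (0:ℝ) ≤ γ := hγ.1
  have hC0 : (0:ℝ) ≤ C := le_trans hc.le hcC
  set N : ℝ := (Fintype.card (Grid d n) : ℝ) with hN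
  have hN0 : 0 ≤ N := Nat.cast_nonneg _
  set cγ : ℝ := c ^ (-γ) with hcγdef
  have hcγ0 : 0 ≤ cγ := Real.rpow_nonneg hc.le _
  set Lγ : ℝ := γ * c ^ (-γ - 1) with hLγdef
  have hLγ0 : 0 ≤ Lγ := mul_nonneg hγ0 (Real.rpow_nonneg hc.le _)
  set G : ℝ := cγ * (βStar * (lamStar * C)) with hGdef
  have hG0 : 0 ≤ G := mul_nonneg hcγ0 (mul_nonneg hbs.le (mul_nonneg hls.le hC0))
  set K₁ : ℝ := G + C * (Lγ * (βStar * (lamStar * C))) + C * (cγ * βStar) with hK₁def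
  have hK₁0 : 0 ≤ K₁ := by
    have h1 : 0 ≤ C * (Lγ * (βStar * (lamStar * C))) :=
      mul_nonneg hC0 (mul_nonneg hLγ0 (mul_nonneg hbs.le (mul_nonneg hls.le hC0)))
    have h2 : 0 ≤ C * (cγ * βStar) := mul_nonneg hC0 (mul_nonneg hcγ0 hbs.le)
    rw [hK₁def]; linarith
  set LD : ℝ := (n:ℝ)^2 * (4 * d) with hLDdef
  have hLD0 : 0 ≤ LD := by rw [hLDdef]; positivity
  set K : ℝ := N * ((K₁ + νS * LD) + N * (lamStar * (M * K₁)) + (K₁ + νI * LD)) with hKdef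
  have hK0 : 0 ≤ K :=
    mul_nonneg hN0 (add_nonneg (add_nonneg (add_nonneg hK₁0 (mul_nonneg hνS.le hLD0))
      (mul_nonneg hN0 (mul_nonneg hls.le (mul_nonneg hM0 hK₁0))))
      (add_nonneg hK₁0 (mul_nonneg hνI.le hLD0)))
  set φ : ℝ → ℝ := fun s => ∑ z : Grid d n,
    (|S₁ s z - S₂ s z| + |F₁ s z - F₂ s z| + |I₁ s z - I₂ s z|) with hφdef
  have hφ0 : ∀ s, 0 ≤ φ s := fun s => Finset.sum_nonneg fun z _ => by positivity
  have hφcont : ContinuousOn φ (Icc 0 T) := by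
    apply continuousOn_finset_sum
    intro z _
    exact (((hS₁c z).sub (hS₂c z)).abs.add ((hF₁c z).sub (hF₂c z)).abs).add
      ((hI₁c z).sub (hI₂c z)).abs
  have hterm : ∀ s, ∀ z : Grid d n,
      |S₁ s z - S₂ s z| + |F₁ s z - F₂ s z| + |I₁ s z - I₂ s z| ≤ φ s := by
    intro s z
    simp only [hφdef]
    exact Finset.single_le_sum
      (f := fun w => |S₁ s w - S₂ s w| + |F₁ s w - F₂ s w| + |I₁ s w - I₂ s w|)
      (fun w _ => by positivity) (Finset.mem_univ z)
  set ρ : ℝ → ℝ := fun s => max 0 (min s T) with hρdef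
  have hρc : Continuous ρ := continuous_const.max (continuous_id.min continuous_const)
  have hρmem : ∀ s, ρ s ∈ Icc (0:ℝ) T := fun s =>
    ⟨le_max_left _ _, max_le hT.le (min_le_right _ _)⟩
  set ψ : ℝ → ℝ := fun s => φ (ρ s) with hψdef
  have hψcont : Continuous ψ := hφcont.comp_continuous hρc hρmem
  have hψeq : ∀ s ∈ Icc (0:ℝ) T, ψ s = φ s := by
    intro s hs
    simp only [hψdef, hρdef]
    rw [min_eq_left hs.2, max_eq_right hs.1]
  have hψ0 : ∀ s, 0 ≤ ψ s := fun s => hφ0 _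
  -- sum bound for the β-convolution terms
  have hsumB : ∀ s ∈ Icc (0:ℝ) T, ∀ y : Grid d n, ∀ (Ff : ℝ → Grid d n → ℝ),
      (∀ z, Ff s z ∈ Icc (0:ℝ) (lamStar * C)) →
      0 ≤ (∑ z, βe s y z * Ff s z) ∧ (∑ z, βe s y z * Ff s z) ≤ βStar * (lamStar * C) := by
    intro s hs y Ff hFf
    constructor
    · exact Finset.sum_nonneg fun z _ => mul_nonneg (hβ0 s y z) (hFf z).1
    · calc (∑ z, βe s y z * Ff s z) ≤ ∑ z, βe s y z * (lamStar * C) :=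
            Finset.sum_le_sum fun z _ => mul_le_mul_of_nonneg_left (hFf z).2 (hβ0 s y z)
        _ = (∑ z, βe s y z) * (lamStar * C) := by rw [Finset.sum_mul]
        _ ≤ βStar * (lamStar * C) := by
            have hlc : (0:ℝ) ≤ lamStar * C := mul_nonneg hls.le hC0
            exact mul_le_mul_of_nonneg_right (hβsum s y) hlc
  -- uniform bound on S*gam
  have hgamBound : ∀ (Sf If Ff : ℝ → Grid d n → ℝ),
      (∀ u ∈ Icc (0:ℝ) T, ∀ z, Sf u z ∈ Icc 0 C ∧ c ≤ Sf u z + If u z ∧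
        Ff u z ∈ Icc 0 (lamStar * C)) →
      ∀ s ∈ Icc (0:ℝ) T, ∀ y, |Sf s y * gam d n γ βe Sf If Ff s y| ≤ C * G := by
    intro Sf If Ff hreg s hs y
    obtain ⟨hSr, hBr, _⟩ := hreg s hs y
    obtain ⟨hsum0, hsumle⟩ := hsumB s hs y Ff (fun z => (hreg s hs z).2.2)
    have hrp0 : 0 ≤ (Sf s y + If s y) ^ (-γ) := Real.rpow_nonneg (le_trans hc.le hBr) _
    have hrple : (Sf s y + If s y) ^ (-γ) ≤ cγ := by
      rw [hcγdef]; exact Real.rpow_le_rpow_of_nonpos hc hBr (neg_nonpos.mpr hγ0)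
    simp only [gam]
    rw [abs_of_nonneg (mul_nonneg hSr.1 (mul_nonneg hrp0 hsum0))]
    calc Sf s y * ((Sf s y + If s y) ^ (-γ) * ∑ z, βe s y z * Ff s z)
        ≤ C * (cγ * (βStar * (lamStar * C))) :=
          mul_le_mul hSr.2 (mul_le_mul hrple hsumle hsum0 hcγ0)
            (mul_nonneg hrp0 hsum0) hC0
      _ = C * G := by rw [hGdef]
  -- key Lipschitz-type estimate
  have hAdiff : ∀ s ∈ Icc (0:ℝ) T, ∀ y,
      |S₁ s y * gam d n γ βe S₁ I₁ F₁ s y - S₂ s y * gam d n γ βe S₂ I₂ F₂ s y|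
        ≤ K₁ * φ s := by
    intro s hs y
    obtain ⟨hSr₁, hBr₁, hFr₁⟩ := hreg₁ s hs y
    obtain ⟨hSr₂, hBr₂, hFr₂⟩ := hreg₂ s hs y
    obtain ⟨hs₁0, hs₁le⟩ := hsumB s hs y F₁ (fun z => (hreg₁ s hs z).2.2)
    obtain ⟨hs₂0, hs₂le⟩ := hsumB s hs y F₂ (fun z => (hreg₂ s hs z).2.2)
    have hr₁0 : 0 ≤ (S₁ s y + I₁ s y) ^ (-γ) := Real.rpow_nonneg (le_trans hc.le hBr₁) _
    have hr₂0 : 0 ≤ (S₂ s y + I₂ s y) ^ (-γ) := Real.rpow_nonneg (le_trans hc.le hBr₂) _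
    have hr₁le : (S₁ s y + I₁ s y) ^ (-γ) ≤ cγ := by
      rw [hcγdef]; exact Real.rpow_le_rpow_of_nonpos hc hBr₁ (neg_nonpos.mpr hγ0)
    have hr₂le : (S₂ s y + I₂ s y) ^ (-γ) ≤ cγ := by
      rw [hcγdef]; exact Real.rpow_le_rpow_of_nonpos hc hBr₂ (neg_nonpos.mpr hγ0)
    have hφS : |S₁ s y - S₂ s y| ≤ φ s := by
      have h := hterm s y
      have := abs_nonneg (F₁ s y - F₂ s y)
      have := abs_nonneg (I₁ s y - I₂ s y)
      linarith
    have hφB : |(S₁ s y + I₁ s y) - (S₂ s y + I₂ s y)| ≤ φ s := by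
      have h := hterm s y
      have h2 : |(S₁ s y + I₁ s y) - (S₂ s y + I₂ s y)|
          ≤ |S₁ s y - S₂ s y| + |I₁ s y - I₂ s y| := by
        rw [show (S₁ s y + I₁ s y) - (S₂ s y + I₂ s y)
            = (S₁ s y - S₂ s y) + (I₁ s y - I₂ s y) from by ring]
        exact abs_add_le _ _
      have := abs_nonneg (F₁ s y - F₂ s y)
      linarith
    have hφF : (∑ z, |F₁ s z - F₂ s z|) ≤ φ s := by
      simp only [hφdef]
      refine Finset.sum_le_sum fun z _ => ?_
      have := abs_nonneg (S₁ s z - S₂ s z)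
      have := abs_nonneg (I₁ s z - I₂ s z)
      linarith
    have hsumd : |(∑ z, βe s y z * F₁ s z) - ∑ z, βe s y z * F₂ s z|
        ≤ βStar * ∑ z, |F₁ s z - F₂ s z| := by
      rw [← Finset.sum_sub_distrib]
      refine le_trans (Finset.abs_sum_le_sum_abs _ _) ?_
      rw [Finset.mul_sum]
      refine Finset.sum_le_sum fun z _ => ?_
      rw [← mul_sub, abs_mul, abs_of_nonneg (hβ0 s y z)]
      exact mul_le_mul_of_nonneg_right
        (le_trans (Finset.single_le_sum (f := fun w => βe s y w)
          (fun w _ => hβ0 s y w) (Finset.mem_univ z)) (hβsum s y)) (abs_nonneg _)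
    have hrd : |(S₁ s y + I₁ s y) ^ (-γ) - (S₂ s y + I₂ s y) ^ (-γ)|
        ≤ Lγ * |(S₁ s y + I₁ s y) - (S₂ s y + I₂ s y)| := by
      rw [hLγdef]; exact rpow_neg_lipschitz hc hγ0 hBr₁ hBr₂
    simp only [gam]
    rw [show S₁ s y * ((S₁ s y + I₁ s y) ^ (-γ) * ∑ z, βe s y z * F₁ s z)
        - S₂ s y * ((S₂ s y + I₂ s y) ^ (-γ) * ∑ z, βe s y z * F₂ s z)
      = (S₁ s y - S₂ s y) * ((S₁ s y + I₁ s y) ^ (-γ) * ∑ z, βe s y z * F₁ s z)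
        + S₂ s y * (((S₁ s y + I₁ s y) ^ (-γ) - (S₂ s y + I₂ s y) ^ (-γ))
            * ∑ z, βe s y z * F₁ s z)
        + S₂ s y * ((S₂ s y + I₂ s y) ^ (-γ)
            * ((∑ z, βe s y z * F₁ s z) - ∑ z, βe s y z * F₂ s z)) from by ring]
    have e1 : |(S₁ s y - S₂ s y) * ((S₁ s y + I₁ s y) ^ (-γ) * ∑ z, βe s y z * F₁ s z)|
        ≤ G * φ s := by
      rw [abs_mul, abs_of_nonneg (mul_nonneg hr₁0 hs₁0)]
      calc |S₁ s y - S₂ s y| * ((S₁ s y + I₁ s y) ^ (-γ) * ∑ z, βe s y z * F₁ s z)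
          ≤ φ s * (cγ * (βStar * (lamStar * C))) :=
            mul_le_mul hφS (mul_le_mul hr₁le hs₁le hs₁0 hcγ0)
              (mul_nonneg hr₁0 hs₁0) (hφ0 s)
        _ = G * φ s := by rw [hGdef]; ring
    have e2 : |S₂ s y * (((S₁ s y + I₁ s y) ^ (-γ) - (S₂ s y + I₂ s y) ^ (-γ))
        * ∑ z, βe s y z * F₁ s z)| ≤ C * (Lγ * (βStar * (lamStar * C))) * φ s := by
      rw [abs_mul, abs_mul, abs_of_nonneg hSr₂.1]
      have h2a : |(S₁ s y + I₁ s y) ^ (-γ) - (S₂ s y + I₂ s y) ^ (-γ)|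
          * |∑ z, βe s y z * F₁ s z| ≤ (Lγ * φ s) * (βStar * (lamStar * C)) := by
        rw [abs_of_nonneg hs₁0]
        exact mul_le_mul (le_trans hrd (mul_le_mul_of_nonneg_left hφB hLγ0)) hs₁le hs₁0
          (mul_nonneg hLγ0 (hφ0 s))
      calc S₂ s y * (|(S₁ s y + I₁ s y) ^ (-γ) - (S₂ s y + I₂ s y) ^ (-γ)|
            * |∑ z, βe s y z * F₁ s z|)
          ≤ C * ((Lγ * φ s) * (βStar * (lamStar * C))) :=
            mul_le_mul hSr₂.2 h2a (mul_nonneg (abs_nonneg _) (abs_nonneg _)) hC0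
        _ = C * (Lγ * (βStar * (lamStar * C))) * φ s := by ring
    have e3 : |S₂ s y * ((S₂ s y + I₂ s y) ^ (-γ)
        * ((∑ z, βe s y z * F₁ s z) - ∑ z, βe s y z * F₂ s z))|
        ≤ C * (cγ * βStar) * φ s := by
      rw [abs_mul, abs_mul, abs_of_nonneg hSr₂.1, abs_of_nonneg hr₂0]
      have h3a : (S₂ s y + I₂ s y) ^ (-γ)
          * |(∑ z, βe s y z * F₁ s z) - ∑ z, βe s y z * F₂ s z|
          ≤ cγ * (βStar * φ s) :=
        mul_le_mul hr₂le (le_trans hsumd (mul_le_mul_of_nonneg_left hφF hbs.le))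
          (abs_nonneg _) hcγ0
      calc S₂ s y * ((S₂ s y + I₂ s y) ^ (-γ)
            * |(∑ z, βe s y z * F₁ s z) - ∑ z, βe s y z * F₂ s z|)
          ≤ C * (cγ * (βStar * φ s)) :=
            mul_le_mul hSr₂.2 h3a (mul_nonneg hr₂0 (abs_nonneg _)) hC0
        _ = C * (cγ * βStar) * φ s := by ring
    set t1 := (S₁ s y - S₂ s y) * ((S₁ s y + I₁ s y) ^ (-γ) * ∑ z, βe s y z * F₁ s z)
    set t2 := S₂ s y * (((S₁ s y + I₁ s y) ^ (-γ) - (S₂ s y + I₂ s y) ^ (-γ))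
        * ∑ z, βe s y z * F₁ s z)
    set t3 := S₂ s y * ((S₂ s y + I₂ s y) ^ (-γ)
        * ((∑ z, βe s y z * F₁ s z) - ∑ z, βe s y z * F₂ s z))
    calc |t1 + t2 + t3| ≤ |t1 + t2| + |t3| := abs_add_le _ _
      _ ≤ |t1| + |t2| + |t3| := by linarith [abs_add_le t1 t2]
      _ ≤ G * φ s + C * (Lγ * (βStar * (lamStar * C))) * φ s + C * (cγ * βStar) * φ s := by
          linarith
      _ = K₁ * φ s := by rw [hK₁def]; ring
  -- discLap continuity
  have hcontL : ∀ (Sf : ℝ → Grid d n → ℝ),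
      (∀ z, ContinuousOn (fun s => Sf s z) (Icc (0:ℝ) T)) → ∀ x : Grid d n,
      ContinuousOn (fun s => discLap d n (Sf s) x) (Icc (0:ℝ) T) := by
    intro Sf hcS x
    simp only [discLap]
    exact continuousOn_const.mul (continuousOn_finset_sum _ fun i _ =>
      (((hcS _).sub (continuousOn_const.mul (hcS x))).add (hcS _)))
  -- main Gronwall inequality
  have main : ∀ t ∈ Icc (0:ℝ) T, ψ t ≤ K * ∫ s in (0:ℝ)..t, ψ s := by
    intro t ht
    have ht0 : (0:ℝ) ≤ t := ht.1
    have htT : t ≤ T := ht.2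
    have hsub : Ioc (0:ℝ) t ⊆ Icc (0:ℝ) T := fun s hs => ⟨hs.1.le, hs.2.trans htT⟩
    have hsubI : Icc (0:ℝ) t ⊆ Icc (0:ℝ) T := fun s hs => ⟨hs.1, hs.2.trans htT⟩
    have hmono : volume.restrict (Ioc (0:ℝ) t) ≤ volume.restrict (Icc (0:ℝ) T) :=
      Measure.restrict_mono hsub le_rfl
    have mS₁ : ∀ z, AEMeasurable (fun s => S₁ s z) (volume.restrict (Ioc (0:ℝ) t)) :=
      fun z => ((hS₁c z).aemeasurable measurableSet_Icc).mono_measure hmono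
    have mF₁ : ∀ z, AEMeasurable (fun s => F₁ s z) (volume.restrict (Ioc (0:ℝ) t)) :=
      fun z => ((hF₁c z).aemeasurable measurableSet_Icc).mono_measure hmono
    have mI₁ : ∀ z, AEMeasurable (fun s => I₁ s z) (volume.restrict (Ioc (0:ℝ) t)) :=
      fun z => ((hI₁c z).aemeasurable measurableSet_Icc).mono_measure hmono
    have mS₂ : ∀ z, AEMeasurable (fun s => S₂ s z) (volume.restrict (Ioc (0:ℝ) t)) :=
      fun z => ((hS₂c z).aemeasurable measurableSet_Icc).mono_measure hmono
    have mF₂ : ∀ z, AEMeasurable (fun s => F₂ s z) (volume.restrict (Ioc (0:ℝ) t)) :=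
      fun z => ((hF₂c z).aemeasurable measurableSet_Icc).mono_measure hmono
    have mI₂ : ∀ z, AEMeasurable (fun s => I₂ s z) (volume.restrict (Ioc (0:ℝ) t)) :=
      fun z => ((hI₂c z).aemeasurable measurableSet_Icc).mono_measure hmono
    have hψint : IntervalIntegrable ψ volume 0 t := hψcont.intervalIntegrable 0 t
    have hIntψ0 : 0 ≤ ∫ s in (0:ℝ)..t, ψ s :=
      intervalIntegral.integral_nonneg ht0 fun s _ => hψ0 s
    have hIntBdd : ∀ (f : ℝ → ℝ) (Kb : ℝ),
        AEMeasurable f (volume.restrict (Ioc (0:ℝ) t)) →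
        (∀ s ∈ Ioc (0:ℝ) t, |f s| ≤ Kb) → IntervalIntegrable f volume 0 t := by
      intro f Kb hm hb
      rw [intervalIntegrable_iff_integrableOn_Ioc_of_le ht0]
      refine Integrable.mono' (integrable_const Kb) hm.aestronglyMeasurable ?_
      exact (ae_restrict_iff' measurableSet_Ioc).mpr (ae_of_all _ fun s hs => by
        simpa [Real.norm_eq_abs] using hb s hs)
    have hIntEst : ∀ (f : ℝ → ℝ) (Kb : ℝ), 0 ≤ Kb → IntervalIntegrable f volume 0 t →
        (∀ s ∈ Icc (0:ℝ) t, |f s| ≤ Kb * ψ s) →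
        |∫ s in (0:ℝ)..t, f s| ≤ Kb * ∫ s in (0:ℝ)..t, ψ s := by
      intro f Kb hKb hfi hfb
      calc |∫ s in (0:ℝ)..t, f s| ≤ ∫ s in (0:ℝ)..t, |f s| :=
            intervalIntegral.abs_integral_le_integral_abs ht0
        _ ≤ ∫ s in (0:ℝ)..t, Kb * ψ s :=
            intervalIntegral.integral_mono_on ht0 hfi.abs (hψint.const_mul Kb) hfb
        _ = Kb * ∫ s in (0:ℝ)..t, ψ s := intervalIntegral.integral_const_mul _ _
    have mgam : ∀ (Sf If Ff : ℝ → Grid d n → ℝ),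
        (∀ z, AEMeasurable (fun s => Sf s z) (volume.restrict (Ioc (0:ℝ) t))) →
        (∀ z, AEMeasurable (fun s => If s z) (volume.restrict (Ioc (0:ℝ) t))) →
        (∀ z, AEMeasurable (fun s => Ff s z) (volume.restrict (Ioc (0:ℝ) t))) →
        ∀ y, AEMeasurable (fun s => Sf s y * gam d n γ βe Sf If Ff s y)
          (volume.restrict (Ioc (0:ℝ) t)) := by
      intro Sf If Ff hS hI hF y
      have hm : Measurable fun x : ℝ => x ^ (-γ) := measurable_rpow_const' (-γ)
      simp only [gam]
      exact (hS y).mul ((hm.comp_aemeasurable ((hS y).add (hI y))).mul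
        (Finset.aemeasurable_fun_sum _ fun z _ => (hβm y z).aemeasurable.mul (hF z)))
    have hA₁m := mgam S₁ I₁ F₁ mS₁ mI₁ mF₁
    have hA₂m := mgam S₂ I₂ F₂ mS₂ mI₂ mF₂
    have hA₁i : ∀ y, IntervalIntegrable
        (fun s => S₁ s y * gam d n γ βe S₁ I₁ F₁ s y) volume 0 t :=
      fun y => hIntBdd _ (C * G) (hA₁m y)
        (fun s hs => hgamBound S₁ I₁ F₁ hreg₁ s (hsub hs) y)
    have hA₂i : ∀ y, IntervalIntegrable
        (fun s => S₂ s y * gam d n γ βe S₂ I₂ F₂ s y) volume 0 t :=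
      fun y => hIntBdd _ (C * G) (hA₂m y)
        (fun s hs => hgamBound S₂ I₂ F₂ hreg₂ s (hsub hs) y)
    have hIntL : ∀ (Sf : ℝ → Grid d n → ℝ),
        (∀ z, ContinuousOn (fun s => Sf s z) (Icc (0:ℝ) T)) → ∀ x : Grid d n,
        IntervalIntegrable (fun s => discLap d n (Sf s) x) volume 0 t := by
      intro Sf hcS x
      apply ContinuousOn.intervalIntegrable
      rw [uIcc_of_le ht0]
      exact (hcontL Sf hcS x).mono hsubI
    have hφψ : ∀ s ∈ Icc (0:ℝ) t, φ s = ψ s := fun s hs => (hψeq s (hsubI hs)).symm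
    -- S component
    have hSbound : ∀ x, |S₁ t x - S₂ t x| ≤ (K₁ + νS * LD) * ∫ s in (0:ℝ)..t, ψ s := by
      intro x
      have hrep : S₁ t x - S₂ t x
          = -(∫ s in (0:ℝ)..t, (S₁ s x * gam d n γ βe S₁ I₁ F₁ s x
              - S₂ s x * gam d n γ βe S₂ I₂ F₂ s x))
            + νS * ∫ s in (0:ℝ)..t,
              (discLap d n (S₁ s) x - discLap d n (S₂ s) x) := by
        rw [hS₁e t ht x, hS₂e t ht x, hinitS x,
          intervalIntegral.integral_sub (hA₁i x) (hA₂i x),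
          intervalIntegral.integral_sub (hIntL S₁ hS₁c x) (hIntL S₂ hS₂c x)]
        ring
      rw [hrep]
      have b1 : |∫ s in (0:ℝ)..t, (S₁ s x * gam d n γ βe S₁ I₁ F₁ s x
          - S₂ s x * gam d n γ βe S₂ I₂ F₂ s x)| ≤ K₁ * ∫ s in (0:ℝ)..t, ψ s :=
        hIntEst _ K₁ hK₁0 ((hA₁i x).sub (hA₂i x)) (fun s hs => by
          rw [← hφψ s hs]; exact hAdiff s (hsubI hs) x)
      have b2 : |∫ s in (0:ℝ)..t, (discLap d n (S₁ s) x - discLap d n (S₂ s) x)|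
          ≤ LD * ∫ s in (0:ℝ)..t, ψ s := by
        apply hIntEst _ LD hLD0 ((hIntL S₁ hS₁c x).sub (hIntL S₂ hS₂c x))
        intro s hs
        rw [← hφψ s hs]
        have h := abs_discLap_le d n (fun z => S₁ s z - S₂ s z) x
        rw [discLap_sub] at h
        refine h.trans ?_
        have hsum : (∑ z, |S₁ s z - S₂ s z|) ≤ φ s := by
          simp only [hφdef]
          refine Finset.sum_le_sum fun z _ => ?_
          have := abs_nonneg (F₁ s z - F₂ s z)
          have := abs_nonneg (I₁ s z - I₂ s z)
          linarith
        calc (n:ℝ)^2 * (4 * d) * ∑ z, |S₁ s z - S₂ s z|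
            ≤ (n:ℝ)^2 * (4 * d) * φ s := by
              refine mul_le_mul_of_nonneg_left hsum (by positivity)
          _ = LD * φ s := by rw [hLDdef]
      calc |-(∫ s in (0:ℝ)..t, (S₁ s x * gam d n γ βe S₁ I₁ F₁ s x
            - S₂ s x * gam d n γ βe S₂ I₂ F₂ s x))
          + νS * ∫ s in (0:ℝ)..t, (discLap d n (S₁ s) x - discLap d n (S₂ s) x)|
          ≤ |∫ s in (0:ℝ)..t, (S₁ s x * gam d n γ βe S₁ I₁ F₁ s x
              - S₂ s x * gam d n γ βe S₂ I₂ F₂ s x)|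
            + νS * |∫ s in (0:ℝ)..t, (discLap d n (S₁ s) x - discLap d n (S₂ s) x)| := by
            refine le_trans (abs_add_le _ _) ?_
            rw [abs_neg, abs_mul, abs_of_pos hνS]
        _ ≤ K₁ * (∫ s in (0:ℝ)..t, ψ s) + νS * (LD * ∫ s in (0:ℝ)..t, ψ s) := by
            have := mul_le_mul_of_nonneg_left b2 hνS.le
            linarith
        _ = (K₁ + νS * LD) * ∫ s in (0:ℝ)..t, ψ s := by ring
    -- I component
    have hIbound : ∀ x, |I₁ t x - I₂ t x| ≤ (K₁ + νI * LD) * ∫ s in (0:ℝ)..t, ψ s := by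
      intro x
      have hrep : I₁ t x - I₂ t x
          = (∫ s in (0:ℝ)..t, (S₁ s x * gam d n γ βe S₁ I₁ F₁ s x
              - S₂ s x * gam d n γ βe S₂ I₂ F₂ s x))
            + νI * ∫ s in (0:ℝ)..t,
              (discLap d n (I₁ s) x - discLap d n (I₂ s) x) := by
        rw [hI₁e t ht x, hI₂e t ht x, hinitI x,
          intervalIntegral.integral_sub (hA₁i x) (hA₂i x),
          intervalIntegral.integral_sub (hIntL I₁ hI₁c x) (hIntL I₂ hI₂c x)]
        ring
      rw [hrep]
      have b1 : |∫ s in (0:ℝ)..t, (S₁ s x * gam d n γ βe S₁ I₁ F₁ s x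
          - S₂ s x * gam d n γ βe S₂ I₂ F₂ s x)| ≤ K₁ * ∫ s in (0:ℝ)..t, ψ s :=
        hIntEst _ K₁ hK₁0 ((hA₁i x).sub (hA₂i x)) (fun s hs => by
          rw [← hφψ s hs]; exact hAdiff s (hsubI hs) x)
      have b2 : |∫ s in (0:ℝ)..t, (discLap d n (I₁ s) x - discLap d n (I₂ s) x)|
          ≤ LD * ∫ s in (0:ℝ)..t, ψ s := by
        apply hIntEst _ LD hLD0 ((hIntL I₁ hI₁c x).sub (hIntL I₂ hI₂c x))
        intro s hs
        rw [← hφψ s hs]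
        have h := abs_discLap_le d n (fun z => I₁ s z - I₂ s z) x
        rw [discLap_sub] at h
        refine h.trans ?_
        have hsum : (∑ z, |I₁ s z - I₂ s z|) ≤ φ s := by
          simp only [hφdef]
          refine Finset.sum_le_sum fun z _ => ?_
          have := abs_nonneg (F₁ s z - F₂ s z)
          have := abs_nonneg (S₁ s z - S₂ s z)
          linarith
        calc (n:ℝ)^2 * (4 * d) * ∑ z, |I₁ s z - I₂ s z|
            ≤ (n:ℝ)^2 * (4 * d) * φ s := by
              refine mul_le_mul_of_nonneg_left hsum (by positivity)
          _ = LD * φ s := by rw [hLDdef]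
      calc |(∫ s in (0:ℝ)..t, (S₁ s x * gam d n γ βe S₁ I₁ F₁ s x
            - S₂ s x * gam d n γ βe S₂ I₂ F₂ s x))
          + νI * ∫ s in (0:ℝ)..t, (discLap d n (I₁ s) x - discLap d n (I₂ s) x)|
          ≤ |∫ s in (0:ℝ)..t, (S₁ s x * gam d n γ βe S₁ I₁ F₁ s x
              - S₂ s x * gam d n γ βe S₂ I₂ F₂ s x)|
            + νI * |∫ s in (0:ℝ)..t, (discLap d n (I₁ s) x - discLap d n (I₂ s) x)| := by
            refine le_trans (abs_add_le _ _) ?_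
            rw [abs_mul, abs_of_pos hνI]
        _ ≤ K₁ * (∫ s in (0:ℝ)..t, ψ s) + νI * (LD * ∫ s in (0:ℝ)..t, ψ s) := by
            have := mul_le_mul_of_nonneg_left b2 hνI.le
            linarith
        _ = (K₁ + νI * LD) * ∫ s in (0:ℝ)..t, ψ s := by ring
    -- F component
    have hFbound : ∀ x, |F₁ t x - F₂ t x|
        ≤ N * (lamStar * (M * K₁)) * ∫ s in (0:ℝ)..t, ψ s := by
      intro x
      have hHc : ∀ y : Grid d n, Continuous fun s => heatKer d n νI s t y x :=
        fun y => heatKer_cont_left d n νI t y x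
      have hHb : ∀ y : Grid d n, ∀ s ∈ Icc (0:ℝ) t, |heatKer d n νI s t y x| ≤ M :=
        fun y s hs => hM s t (hsubI hs) ht y x
      have hJint : ∀ (Sf If Ff : ℝ → Grid d n → ℝ),
          (∀ y, AEMeasurable (fun s => Sf s y * gam d n γ βe Sf If Ff s y)
            (volume.restrict (Ioc (0:ℝ) t))) →
          (∀ s ∈ Icc (0:ℝ) T, ∀ y, |Sf s y * gam d n γ βe Sf If Ff s y| ≤ C * G) →
          ∀ y, IntervalIntegrable (fun s => lam (t - s)
            * (Sf s y * gam d n γ βe Sf If Ff s y)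
            * heatKer d n νI s t y x) volume 0 t := by
        intro Sf If Ff hm hbd y
        apply hIntBdd _ (lamStar * (C * G) * M)
        · exact ((hlamm.comp (measurable_const.sub measurable_id)).aemeasurable.mul
            (hm y)).mul (hHc y).aemeasurable
        · intro s hs
          have h1 := hlamb (t - s)
          have h2 := hbd s (hsub hs) y
          have h3 := hHb y s (Ioc_subset_Icc_self hs)
          have hCG : (0:ℝ) ≤ C * G := mul_nonneg hC0 hG0
          rw [abs_mul, abs_mul]
          refine mul_le_mul (mul_le_mul ?_ h2 (abs_nonneg _) hls.le) h3 (abs_nonneg _)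
            (mul_nonneg hls.le hCG)
          rw [abs_of_nonneg h1.1]; exact h1.2
      have hJ₁ := hJint S₁ I₁ F₁ hA₁m (hgamBound S₁ I₁ F₁ hreg₁)
      have hJ₂ := hJint S₂ I₂ F₂ hA₂m (hgamBound S₂ I₂ F₂ hreg₂)
      have hfun : ∀ y : Grid d n, (fun s => lam (t - s)
          * (S₁ s y * gam d n γ βe S₁ I₁ F₁ s y
            - S₂ s y * gam d n γ βe S₂ I₂ F₂ s y) * heatKer d n νI s t y x)
          = fun s => lam (t - s) * (S₁ s y * gam d n γ βe S₁ I₁ F₁ s y)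
              * heatKer d n νI s t y x
            - lam (t - s) * (S₂ s y * gam d n γ βe S₂ I₂ F₂ s y)
              * heatKer d n νI s t y x :=
        fun y => funext fun s => by ring
      have hrep : F₁ t x - F₂ t x = ∑ y, ∫ s in (0:ℝ)..t,
          lam (t - s) * (S₁ s y * gam d n γ βe S₁ I₁ F₁ s y
            - S₂ s y * gam d n γ βe S₂ I₂ F₂ s y) * heatKer d n νI s t y x := by
        rw [hF₁e t ht x, hF₂e t ht x]
        rw [show (∑ y, I₁ 0 y * heatKer d n νI 0 t y x)
            = ∑ y, I₂ 0 y * heatKer d n νI 0 t y x from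
          Finset.sum_congr rfl fun y _ => by rw [hinitI y]]
        rw [add_sub_add_left_eq_sub, ← Finset.sum_sub_distrib]
        refine Finset.sum_congr rfl fun y _ => ?_
        rw [← intervalIntegral.integral_sub (hJ₁ y) (hJ₂ y)]
        exact intervalIntegral.integral_congr fun s _ => by ring
      rw [hrep]
      have hcomb : ∀ y : Grid d n, IntervalIntegrable (fun s => lam (t - s)
          * (S₁ s y * gam d n γ βe S₁ I₁ F₁ s y
            - S₂ s y * gam d n γ βe S₂ I₂ F₂ s y)
          * heatKer d n νI s t y x) volume 0 t := by
        intro y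
        rw [hfun y]
        exact (hJ₁ y).sub (hJ₂ y)
      have hone : ∀ y : Grid d n, |∫ s in (0:ℝ)..t, lam (t - s)
          * (S₁ s y * gam d n γ βe S₁ I₁ F₁ s y
            - S₂ s y * gam d n γ βe S₂ I₂ F₂ s y) * heatKer d n νI s t y x|
          ≤ lamStar * (M * K₁) * ∫ s in (0:ℝ)..t, ψ s := by
        intro y
        apply hIntEst _ (lamStar * (M * K₁))
          (mul_nonneg hls.le (mul_nonneg hM0 hK₁0)) (hcomb y)
        intro s hs
        have h1 := hlamb (t - s)
        have h2 : |S₁ s y * gam d n γ βe S₁ I₁ F₁ s y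
            - S₂ s y * gam d n γ βe S₂ I₂ F₂ s y| ≤ K₁ * φ s := hAdiff s (hsubI hs) y
        have h3 := hHb y s hs
        rw [abs_mul, abs_mul]
        calc |lam (t - s)| * |S₁ s y * gam d n γ βe S₁ I₁ F₁ s y
              - S₂ s y * gam d n γ βe S₂ I₂ F₂ s y| * |heatKer d n νI s t y x|
            ≤ lamStar * (K₁ * φ s) * M := by
              refine mul_le_mul (mul_le_mul ?_ h2 (abs_nonneg _) hls.le) h3 (abs_nonneg _)
                (mul_nonneg hls.le (mul_nonneg hK₁0 (hφ0 s)))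
              rw [abs_of_nonneg h1.1]; exact h1.2
          _ = lamStar * (M * K₁) * φ s := by ring
          _ = lamStar * (M * K₁) * ψ s := by rw [hφψ s hs]
      calc |∑ y, ∫ s in (0:ℝ)..t, lam (t - s)
            * (S₁ s y * gam d n γ βe S₁ I₁ F₁ s y
              - S₂ s y * gam d n γ βe S₂ I₂ F₂ s y) * heatKer d n νI s t y x|
          ≤ ∑ y, |∫ s in (0:ℝ)..t, lam (t - s)
            * (S₁ s y * gam d n γ βe S₁ I₁ F₁ s y
              - S₂ s y * gam d n γ βe S₂ I₂ F₂ s y) * heatKer d n νI s t y x| :=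
            Finset.abs_sum_le_sum_abs _ _
        _ ≤ ∑ _y : Grid d n, lamStar * (M * K₁) * ∫ s in (0:ℝ)..t, ψ s :=
            Finset.sum_le_sum fun y _ => hone y
        _ = N * (lamStar * (M * K₁)) * ∫ s in (0:ℝ)..t, ψ s := by
            rw [Finset.sum_const, Finset.card_univ, nsmul_eq_mul, ← hN]; ring
    -- combine
    rw [hψeq t ht]
    simp only [hφdef]
    calc ∑ z : Grid d n, (|S₁ t z - S₂ t z| + |F₁ t z - F₂ t z| + |I₁ t z - I₂ t z|)
        ≤ ∑ _z : Grid d n, ((K₁ + νS * LD) + N * (lamStar * (M * K₁)) + (K₁ + νI * LD))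
            * ∫ s in (0:ℝ)..t, ψ s := by
          refine Finset.sum_le_sum fun z _ => ?_
          have h1 := hSbound z
          have h2 := hFbound z
          have h3 := hIbound z
          rw [add_mul, add_mul]
          linarith
      _ = K * ∫ s in (0:ℝ)..t, ψ s := by
          rw [Finset.sum_const, Finset.card_univ, nsmul_eq_mul, ← hN, hKdef]; ring
  have hzero := gronwall_integral_zero hT.le hK0 hψcont hψ0 main
  intro t ht x
  have h0 : φ t = 0 := by rw [← hψeq t ht]; exact hzero t ht
  have h0' : ∑ z : Grid d n,
      (|S₁ t z - S₂ t z| + |F₁ t z - F₂ t z| + |I₁ t z - I₂ t z|) = 0 := by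
    simpa only [hφdef] using h0
  have hx := (Finset.sum_eq_zero_iff_of_nonneg fun z _ => by positivity).mp h0'
    x (Finset.mem_univ x)
  have a1 := abs_nonneg (S₁ t x - S₂ t x)
  have a2 := abs_nonneg (F₁ t x - F₂ t x)
  have a3 := abs_nonneg (I₁ t x - I₂ t x)
  refine ⟨?_, ?_, ?_⟩
  · have h : |S₁ t x - S₂ t x| = 0 := by linarith
    exact sub_eq_zero.mp (abs_eq_zero.mp h)
  · have h : |F₁ t x - F₂ t x| = 0 := by linarith
    exact sub_eq_zero.mp (abs_eq_zero.mp h)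
  · have h : |I₁ t x - I₂ t x| = 0 := by linarith
    exact sub_eq_zero.mp (abs_eq_zero.mp h)
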